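/- For every nonnegative integer k, both 2(3^(3^k·70) − 1) and 2(3^(3^k·70) + 1) are practical numbers. -/

import Mathlib

/-- A positive integer `m` is practical if every `n` with `1 ≤ n ≤ m` is a sum of
distinct positive divisors of `m`. -/
def Practical (m : ℕ) : Prop :=
  0 < m ∧ ∀ n : ℕ, 1 ≤ n → n ≤ m → ∃ s : Finset ℕ, s ⊆ m.divisors ∧ ∑ d ∈ s, d = n


lemma practical_one : Practical 1 := by
  refine ⟨one_pos, fun n h1 h2 => ⟨{1}, ?_, by simp; omega⟩⟩
  simp [Nat.divisors_one]

lemma practical_mul {m n : ℕ} (hm : Practical m) (hn1 : 1 ≤ n) (hn2 : n ≤ m + 1) :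
    Practical (m * n) := by
  obtain ⟨hm0, hrep⟩ := hm
  refine ⟨by positivity, fun N hN1 hN2 => ?_⟩
  have hmn : m * n ≠ 0 := by positivity
  set t := N % n with htdef
  set s := N / n with hsdef
  have hts : n * s + t = N := Nat.div_add_mod N n
  have ht : t < n := Nat.mod_lt _ hn1
  have hs : s ≤ m := by
    have : N / n ≤ (m * n) / n := Nat.div_le_div_right hN2
    rwa [Nat.mul_div_cancel _ hn1] at this
  -- representation of t
  have hrep' : ∀ u : ℕ, u ≤ m → ∃ S : Finset ℕ, S ⊆ m.divisors ∧ ∑ d ∈ S, d = u := by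
    intro u hu
    rcases Nat.eq_zero_or_pos u with h | h
    · exact ⟨∅, by simp, by simp [h]⟩
    · exact hrep u h hu
  obtain ⟨S1, hS1sub, hS1sum⟩ := hrep' t (by omega)
  obtain ⟨S2, hS2sub, hS2sum⟩ := hrep' s hs
  have hS1lt : ∀ d ∈ S1, d < n := by
    intro d hd
    have : d ≤ ∑ x ∈ S1, x := Finset.single_le_sum (fun i _ => Nat.zero_le i) hd
    omega
  refine ⟨S1 ∪ S2.image (fun d => n * d), ?_, ?_⟩
  · intro d hd
    rcases Finset.mem_union.mp hd with h | h
    · have := Nat.mem_divisors.mp (hS1sub h)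
      exact Nat.mem_divisors.mpr ⟨Dvd.dvd.mul_right this.1 n, hmn⟩
    · obtain ⟨e, he, rfl⟩ := Finset.mem_image.mp h
      have := Nat.mem_divisors.mp (hS2sub he)
      exact Nat.mem_divisors.mpr ⟨Nat.mul_comm n e ▸ (mul_dvd_mul this.1 dvd_rfl : e * n ∣ m * n), hmn⟩
  · have hdisj : Disjoint S1 (S2.image (fun d => n * d)) := by
      rw [Finset.disjoint_right]
      intro d hd hd1
      obtain ⟨e, he, rfl⟩ := Finset.mem_image.mp hd
      have he1 : 1 ≤ e := (Nat.pos_of_mem_divisors (hS2sub he))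
      have := hS1lt _ hd1
      nlinarith
    rw [Finset.sum_union hdisj, hS1sum,
      Finset.sum_image (fun a _ b _ h => Nat.eq_of_mul_eq_mul_left (by omega) h),
      ← Finset.mul_sum, hS2sum]
    omega

lemma practical_eq {m n : ℕ} (hm : Practical m) (h : m = n) : Practical n := h ▸ hm


lemma base_minus : Practical (2 * (3 ^ 70 - 1)) := by
  have e : (2 * (3 ^ 70 - 1) : ℕ) = 1*2*2*2*2*11*11*61*71*547*1093*2664097031*374857981681 := by norm_num
  rw [e]
  exact practical_mul (practical_mul (practical_mul (practical_mul (practical_mul (practical_mul (practical_mul (practical_mul (practical_mul (practical_mul (practical_mul (practical_mul (practical_one) (by norm_num) (by norm_num)) (by norm_num) (by norm_num)) (by norm_num) (by norm_num)) (by norm_num) (by norm_num)) (by norm_num) (by norm_num)) (by norm_num) (by norm_num)) (by norm_num) (by norm_num)) (by norm_num) (by norm_num)) (by norm_num) (by norm_num)) (by norm_num) (by norm_num)) (by norm_num) (by norm_num)) (by norm_num) (by norm_num)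

lemma base_plus : Practical (2 * (3 ^ 70 + 1)) := by
  have e : (2 * (3 ^ 70 + 1) : ℕ) = 1*2*2*5*5*29*1181*16493*28596961*32839661*94373861 := by norm_num
  rw [e]
  exact practical_mul (practical_mul (practical_mul (practical_mul (practical_mul (practical_mul (practical_mul (practical_mul (practical_mul (practical_mul (practical_one) (by norm_num) (by norm_num)) (by norm_num) (by norm_num)) (by norm_num) (by norm_num)) (by norm_num) (by norm_num)) (by norm_num) (by norm_num)) (by norm_num) (by norm_num)) (by norm_num) (by norm_num)) (by norm_num) (by norm_num)) (by norm_num) (by norm_num)) (by norm_num) (by norm_num)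

lemma step_minus {y : ℕ} (hy : 3 ≤ y) (h : Practical (2 * (y ^ 70 - 1))) :
    Practical (2 * (y ^ 210 - 1)) := by
  have hmono : ∀ i j : ℕ, i ≤ j → y ^ i ≤ y ^ j := fun i j hij =>
    Nat.pow_le_pow_right (by omega) hij
  have hstep : ∀ i : ℕ, 3 * y ^ i ≤ y ^ (i + 1) := fun i => by
    calc 3 * y ^ i ≤ y * y ^ i := Nat.mul_le_mul_right _ hy
    _ = y ^ (i + 1) := by ring
  have hu3 : 3 ≤ y ^ 35 := le_trans hy (Nat.le_self_pow (by norm_num) y)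
  have h2u : 2 * y ^ 35 ≤ y ^ 70 := by
    have h1 : y ^ 35 * y ^ 35 = y ^ 70 := by ring
    have h2 : 3 * y ^ 35 ≤ y ^ 35 * y ^ 35 := Nat.mul_le_mul_right _ hu3
    omega
  have huv' : y ^ 35 ≤ y ^ 70 := hmono 35 70 (by norm_num)
  have hv9 : 9 ≤ y ^ 70 := by
    have h2 : 3 * y ^ 35 ≤ y ^ 35 * y ^ 35 := Nat.mul_le_mul_right _ hu3
    have h1 : y ^ 35 * y ^ 35 = y ^ 70 := by ring
    omega
  set b : ℕ := (y ^ 70 + 1) - y ^ 35 with hb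
  set a : ℕ := y ^ 70 + y ^ 35 + 1 with ha
  have hb1 : 1 ≤ b := by omega
  have hb2 : b ≤ 2 * (y ^ 70 - 1) + 1 := by omega
  have hP1 := practical_mul h hb1 hb2
  have hbge : y ^ 35 ≤ b := by omega
  have ha2 : a ≤ 2 * (y ^ 70 - 1) * b + 1 := by
    have h1 : a ≤ 3 * y ^ 70 := by omega
    have h2 : 3 * y ^ 70 ≤ y ^ 35 * y ^ 70 := Nat.mul_le_mul_right _ hu3
    have h3 : y ^ 35 * y ^ 70 ≤ (2 * (y ^ 70 - 1)) * y ^ 35 := by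
      rw [Nat.mul_comm]
      refine Nat.mul_le_mul_right _ ?_
      omega
    have h4 : (2 * (y ^ 70 - 1)) * y ^ 35 ≤ 2 * (y ^ 70 - 1) * b :=
      Nat.mul_le_mul_left _ hbge
    omega
  have hP2 := practical_mul hP1 (by omega) ha2
  refine practical_eq hP2 ?_
  have h210 : 1 ≤ y ^ 210 := Nat.one_le_pow _ _ (by omega)
  rw [hb, ha]
  zify [huv', hv9, h210, show (1:ℕ) ≤ y ^ 70 from by omega,
    show y ^ 35 ≤ y ^ 70 + 1 from by omega]
  ring

set_option maxHeartbeats 4000000 in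
lemma step_plus {y : ℕ} (hy : 3 ≤ y) (h : Practical (2 * (y ^ 70 + 1))) :
    Practical (2 * (y ^ 210 + 1)) := by
  set z : ℕ := y ^ 2 with hz
  have hz9 : 9 ≤ z := by
    have : 3 * 3 ≤ y * y := Nat.mul_le_mul hy hy
    have hzy : z = y * y := by rw [hz]; ring
    omega
  have hmono : ∀ i j : ℕ, i ≤ j → z ^ i ≤ z ^ j := fun i j hij =>
    Nat.pow_le_pow_right (by omega) hij
  have hstep : ∀ i : ℕ, 9 * z ^ i ≤ z ^ (i + 1) := fun i => by
    calc 9 * z ^ i ≤ z * z ^ i := Nat.mul_le_mul_right _ hz9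
    _ = z ^ (i + 1) := by ring
  have h70 : y ^ 70 = z ^ 35 := by rw [hz]; ring
  have h210 : y ^ 210 = z ^ 105 := by rw [hz]; ring
  set Bpos : ℕ := z^22 + z^21 + z^12 + z^11 + z^10 + z^1 + z^0 with hBpos
  set Bneg : ℕ := z^19 + z^18 + z^17 + z^5 + z^4 + z^3 with hBneg
  set Apos : ℕ := z^48 + z^46 + z^43 + 2*z^41 + z^39 + z^36 + z^34 + z^32 + z^16 + z^14
      + z^12 + z^9 + 2*z^7 + z^5 + z^2 + z^0 with hApos
  set Aneg : ℕ := z^47 + z^42 + z^40 + z^35 + z^33 + z^31 + z^28 + z^26 + z^24 + z^22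
      + z^20 + z^17 + z^15 + z^13 + z^8 + z^6 + z^1 with hAneg
  have hz0 : z^0 = 1 := pow_zero z
  have hB : Bneg + z^16 + 1 ≤ Bpos := by
    have e1 := hmono 17 19 (by norm_num); have e2 := hmono 18 19 (by norm_num)
    have e3 : 9*z^19 ≤ z^20 := hstep 19
    have e4 := hmono 3 5 (by norm_num); have e5 := hmono 4 5 (by norm_num)
    have e6 : 9*z^5 ≤ z^6 := hstep 5
    have e7 := hmono 6 20 (by norm_num); have e8 := hmono 16 20 (by norm_num)
    have e9 : 9*z^20 ≤ z^21 := hstep 20; have e10 := hmono 21 22 (by norm_num)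
    have e11 : 9*z^21 ≤ z^22 := hstep 21
    omega
  have hA : Aneg + 1 ≤ Apos := by
    have k1 := hmono 47 48 (by norm_num)
    have k2 := hmono 42 43 (by norm_num)
    have k3 := hmono 40 41 (by norm_num)
    have k4 := hmono 35 36 (by norm_num)
    have k5 := hmono 33 34 (by norm_num)
    have k6 := hmono 31 32 (by norm_num)
    have k7a := hmono 26 28 (by norm_num); have k7b := hmono 24 28 (by norm_num)
    have k7c := hmono 22 28 (by norm_num); have k7d := hmono 20 28 (by norm_num)
    have k7e := hmono 17 28 (by norm_num); have k7f := hmono 15 28 (by norm_num)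
    have k7g := hmono 13 28 (by norm_num)
    have k8 : 9*z^28 ≤ z^29 := hstep 28
    have k9 := hmono 29 46 (by norm_num)
    have k10a := hmono 6 8 (by norm_num); have k10b := hmono 1 8 (by norm_num)
    have k11 : 9*z^8 ≤ z^9 := hstep 8
    omega
  set b : ℕ := Bpos - Bneg with hb
  set a : ℕ := Apos - Aneg with ha
  have hb1 : 1 ≤ b := by omega
  have hbz : z^16 ≤ b := by omega
  have hb2 : b ≤ 2 * (y^70 + 1) + 1 := by
    have e1 := hmono 21 22 (by norm_num); have e2 := hmono 12 22 (by norm_num)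
    have e3 := hmono 11 22 (by norm_num); have e4 := hmono 10 22 (by norm_num)
    have e5 := hmono 1 22 (by norm_num); have e6 := hmono 0 22 (by norm_num)
    have e7 : 9*z^22 ≤ z^23 := hstep 22
    have e8 := hmono 23 35 (by norm_num)
    rw [h70]
    omega
  have hP1 := practical_mul h hb1 hb2
  have ha2 : a ≤ 2 * (y^70 + 1) * b + 1 := by
    have h1 : Apos ≤ 33 * z^48 := by
      have := hmono 46 48 (by norm_num); have := hmono 43 48 (by norm_num)
      have := hmono 41 48 (by norm_num); have := hmono 39 48 (by norm_num)
      have := hmono 36 48 (by norm_num); have := hmono 34 48 (by norm_num)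
      have := hmono 32 48 (by norm_num); have := hmono 16 48 (by norm_num)
      have := hmono 14 48 (by norm_num); have := hmono 12 48 (by norm_num)
      have := hmono 9 48 (by norm_num); have := hmono 7 48 (by norm_num)
      have := hmono 5 48 (by norm_num); have := hmono 2 48 (by norm_num)
      have := hmono 0 48 (by norm_num)
      omega
    have h2 : 33 * z^48 ≤ z^50 := by
      have e1 : 9*z^48 ≤ z^49 := hstep 48
      have e2 : 9*z^49 ≤ z^50 := hstep 49
      have e3 := hmono 48 49 (by norm_num)
      omega
    have h3 : z^50 ≤ z^35 * z^16 := by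
      have : z^35 * z^16 = z^51 := by ring
      rw [this]; exact hmono 50 51 (by norm_num)
    have h4 : z^35 * z^16 ≤ 2 * (y^70 + 1) * z^16 := by
      refine Nat.mul_le_mul_right _ ?_
      rw [h70]; omega
    have h5 : 2 * (y^70 + 1) * z^16 ≤ 2 * (y^70 + 1) * b :=
      Nat.mul_le_mul_left _ hbz
    omega
  have hP2 := practical_mul hP1 (by omega) ha2
  refine practical_eq hP2 ?_
  have hB' : Bneg ≤ Bpos := by omega
  have hA' : Aneg ≤ Apos := by omega
  rw [hb, ha, h70, h210]
  zify [hB', hA']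
  rw [hBpos, hBneg, hApos, hAneg]
  push_cast
  ring

theorem melfi_practical_pair (k : ℕ) :
    Practical (2 * (3 ^ (3 ^ k * 70) - 1)) ∧ Practical (2 * (3 ^ (3 ^ k * 70) + 1)) := by
  induction k with
  | zero =>
    have h : (3:ℕ) ^ (3 ^ 0 * 70) = 3 ^ 70 := by norm_num
    rw [h]
    exact ⟨base_minus, base_plus⟩
  | succ k ih =>
    have hy : 3 ≤ 3 ^ (3 ^ k) := by
      have : (3:ℕ) ^ 1 ≤ 3 ^ (3 ^ k) :=
        Nat.pow_le_pow_right (by norm_num) (Nat.one_le_pow _ _ (by norm_num))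
      simpa using this
    have e70 : (3:ℕ) ^ (3 ^ k * 70) = (3 ^ (3 ^ k)) ^ 70 := pow_mul 3 (3 ^ k) 70
    have e210 : (3:ℕ) ^ (3 ^ (k + 1) * 70) = (3 ^ (3 ^ k)) ^ 210 := by
      rw [show 3 ^ (k + 1) * 70 = 3 ^ k * 210 by rw [pow_succ]; ring, pow_mul]
    obtain ⟨ihm, ihp⟩ := ih
    rw [e70] at ihm ihp
    rw [e210]
    exact ⟨step_minus hy ihm, step_plus hy ihp⟩
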